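/- For any matrices Φ_v, Φ_w and any achievable gain L (i.e., Φ_v = Φ_w L with Φ_w invertible), and any noise realization (v, w) in the ellipsoids {‖H_v v‖ ≤ 1}, {‖H_w w‖ ≤ 1}, the quadratic regret cost ‖Q^{1/2}(Φ_v v + Φ_w w)‖² − ‖Q^{1/2}(Φ_{v,nc} v + Φ_{w,nc} w)‖² is bounded above by λ_max of the symmetric matrix [H_v^{-T}Φ_vᵀ; H_w^{-T}Φ_wᵀ] Q [·]ᵀ − J_nc evaluated on the product of unit balls (hence by λ_max of that matrix scaled by 2). -/

import Mathlib

open Matrix Finset Polynomial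

/-- Block lower-triangular: the (i,j) block vanishes when the block index i < j. -/
def IsBlockLT {k n m : ℕ} (M : Matrix (Fin k × Fin n) (Fin k × Fin m) ℝ) : Prop :=
  ∀ i j, i.1 < j.1 → M i j = 0

/-- Strictly block lower-triangular: the (i,j) block vanishes when i ≤ j. -/
def IsStrictBlockLT {k n m : ℕ} (M : Matrix (Fin k × Fin n) (Fin k × Fin m) ℝ) : Prop :=
  ∀ i j, i.1 ≤ j.1 → M i j = 0

/-- Block-diagonal: the (i,j) block vanishes when i ≠ j. -/
def IsBlockDiag {k n m : ℕ} (M : Matrix (Fin k × Fin n) (Fin k × Fin m) ℝ) : Prop :=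
  ∀ i j, i.1 ≠ j.1 → M i j = 0

/-- All diagonal blocks equal the identity. -/
def IdDiagBlocks {k n : ℕ} (M : Matrix (Fin k × Fin n) (Fin k × Fin n) ℝ) : Prop :=
  ∀ i j, i.1 = j.1 → M i j = (if i.2 = j.2 then (1 : ℝ) else 0)

/-- The block-downshift operator: identity blocks on the first block subdiagonal. -/
def downshift (k n : ℕ) : Matrix (Fin k × Fin n) (Fin k × Fin n) ℝ :=
  fun i j => if (i.1 : ℕ) = (j.1 : ℕ) + 1 ∧ i.2 = j.2 then 1 else 0

/-- Euclidean norm of a vector. -/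
noncomputable def euclNorm {ι : Type*} [Fintype ι] (x : ι → ℝ) : ℝ :=
  Real.sqrt (∑ i, x i ^ 2)

/-- Spectral norm (largest singular value) of a matrix. -/
noncomputable def specNorm {ι κ : Type*} [Fintype ι] [Fintype κ] [DecidableEq κ]
    (M : Matrix ι κ ℝ) : ℝ :=
  ‖LinearMap.toContinuousLinearMap (Matrix.toEuclideanLin M)‖

/-- Squared Frobenius norm. -/
def frobSq {ι κ : Type*} [Fintype ι] [Fintype κ] (M : Matrix ι κ ℝ) : ℝ :=
  ∑ i, ∑ j, (M i j) ^ 2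

lemma spec_toLin' {n : Type*} [Fintype n] [DecidableEq n] (M : Matrix n n ℝ) :
    spectrum ℝ (Matrix.toLin' M) = spectrum ℝ M :=
  AlgEquiv.spectrum_eq (Matrix.toLinAlgEquiv' (n := n) (R := ℝ)) M

lemma quad_le {n : Type*} [Fintype n] [DecidableEq n] {M : Matrix n n ℝ} (hM : M.IsHermitian)
    {c : ℝ} (hc : ∀ i, hM.eigenvalues i ≤ c) (z : n → ℝ) :
    z ⬝ᵥ (M *ᵥ z) ≤ c * (z ⬝ᵥ z) := by
  set U := (hM.eigenvectorUnitary : Matrix n n ℝ) with hU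
  have hstar : star U = Uᵀ := by
    rw [Matrix.star_eq_conjTranspose, Matrix.conjTranspose_eq_transpose_of_trivial]
  have hUU : U * Uᵀ = 1 := by
    rw [← hstar]; exact (Matrix.mem_unitaryGroup_iff).mp hM.eigenvectorUnitary.2
  set y := Uᵀ *ᵥ z with hy
  have hspec : M = U * Matrix.diagonal hM.eigenvalues * Uᵀ := by
    have := hM.spectral_theorem
    rw [Unitary.conjStarAlgAut_apply, ← hU, hstar] at this
    simpa using this
  have hMz : M *ᵥ z = U *ᵥ (Matrix.diagonal hM.eigenvalues *ᵥ y) := by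
    rw [hy, Matrix.mulVec_mulVec, Matrix.mulVec_mulVec, ← hspec]
  have h1 : z ⬝ᵥ (M *ᵥ z) = y ⬝ᵥ (Matrix.diagonal hM.eigenvalues *ᵥ y) := by
    rw [hMz, Matrix.dotProduct_mulVec, ← Matrix.mulVec_transpose, ← hy]
  have h2 : y ⬝ᵥ y = z ⬝ᵥ z := by
    rw [hy, Matrix.dotProduct_mulVec, ← Matrix.mulVec_transpose, Matrix.transpose_transpose,
      Matrix.mulVec_mulVec, hUU, Matrix.one_mulVec]
  rw [h1, ← h2]
  have h3 : y ⬝ᵥ (Matrix.diagonal hM.eigenvalues *ᵥ y) = ∑ i, hM.eigenvalues i * (y i)^2 := by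
    simp [dotProduct, Matrix.mulVec_diagonal, mul_comm, sq, mul_assoc, mul_left_comm]
  rw [h3, dotProduct, Finset.mul_sum]
  apply Finset.sum_le_sum
  intro i _
  calc hM.eigenvalues i * y i ^2 ≤ c * y i ^ 2 :=
        mul_le_mul_of_nonneg_right (hc i) (sq_nonneg (y i))
    _ = c * (y i * y i) := by ring

lemma enorm_sq_eq_dot {ι : Type*} [Fintype ι] (x : ι → ℝ) : euclNorm x ^ 2 = x ⬝ᵥ x := by
  rw [euclNorm, Real.sq_sqrt (Finset.sum_nonneg fun i _ => sq_nonneg _)]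
  simp [dotProduct, sq]

theorem stmt18 {p q : ℕ}
    (Q Qh : Matrix (Fin p) (Fin p) ℝ) (hQ : Q.PosDef)
    (hQh : Qh.PosDef) (hQ2 : Qh * Qh = Q)
    (Hv : Matrix (Fin q) (Fin q) ℝ) (Hw : Matrix (Fin p) (Fin p) ℝ)
    (hHv : IsUnit Hv) (hHw : IsUnit Hw)
    (Φv Φvnc : Matrix (Fin p) (Fin q) ℝ) (Φw Φwnc : Matrix (Fin p) (Fin p) ℝ)
    (L : Matrix (Fin p) (Fin q) ℝ) (hL : Φv = Φw * L) (hΦw : IsUnit Φw)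
    (μ : ℝ)
    (hμ : IsGreatest {t : ℝ | Module.End.HasEigenvalue (Matrix.toLin'
        (Matrix.fromRows ((Hv⁻¹)ᵀ * Φvᵀ) ((Hw⁻¹)ᵀ * Φwᵀ) * Q *
          (Matrix.fromRows ((Hv⁻¹)ᵀ * Φvᵀ) ((Hw⁻¹)ᵀ * Φwᵀ))ᵀ -
         Matrix.fromRows ((Hv⁻¹)ᵀ * Φvncᵀ) ((Hw⁻¹)ᵀ * Φwncᵀ) * Q *
          (Matrix.fromRows ((Hv⁻¹)ᵀ * Φvncᵀ) ((Hw⁻¹)ᵀ * Φwncᵀ))ᵀ)) t} μ)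
    (v : Fin q → ℝ) (w : Fin p → ℝ)
    (hv : euclNorm (Hv.mulVec v) ≤ 1) (hw : euclNorm (Hw.mulVec w) ≤ 1) :
    euclNorm (Qh.mulVec (Φv.mulVec v + Φw.mulVec w)) ^ 2 -
      euclNorm (Qh.mulVec (Φvnc.mulVec v + Φwnc.mulVec w)) ^ 2 ≤ 2 * max μ 0 := by
  have hQsym : Qᵀ = Q := by
    rw [← Matrix.conjTranspose_eq_transpose_of_trivial]; exact hQ.1
  have hQhsym : Qhᵀ = Qh := by
    rw [← Matrix.conjTranspose_eq_transpose_of_trivial]; exact hQh.1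
  have hHvd : IsUnit Hv.det := (Matrix.isUnit_iff_isUnit_det Hv).mp hHv
  have hHwd : IsUnit Hw.det := (Matrix.isUnit_iff_isUnit_det Hw).mp hHw
  set A := Matrix.fromRows ((Hv⁻¹)ᵀ * Φvᵀ) ((Hw⁻¹)ᵀ * Φwᵀ) with hA
  set B := Matrix.fromRows ((Hv⁻¹)ᵀ * Φvncᵀ) ((Hw⁻¹)ᵀ * Φwncᵀ) with hB
  set M := A * Q * Aᵀ - B * Q * Bᵀ with hMdef
  set z : Fin q ⊕ Fin p → ℝ := Sum.elim (Hv *ᵥ v) (Hw *ᵥ w) with hz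
  -- key transposition facts
  have hAz : Aᵀ *ᵥ z = Φv *ᵥ v + Φw *ᵥ w := by
    rw [hA, Matrix.transpose_fromRows, hz, Matrix.fromCols_mulVec_sumElim]
    rw [Matrix.transpose_mul, Matrix.transpose_transpose, Matrix.transpose_transpose,
      Matrix.transpose_mul, Matrix.transpose_transpose, Matrix.transpose_transpose,
      Matrix.mulVec_mulVec, Matrix.mulVec_mulVec, Matrix.mul_assoc, Matrix.mul_assoc,
      Matrix.nonsing_inv_mul Hv hHvd, Matrix.nonsing_inv_mul Hw hHwd, Matrix.mul_one,
      Matrix.mul_one]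
  have hBz : Bᵀ *ᵥ z = Φvnc *ᵥ v + Φwnc *ᵥ w := by
    rw [hB, Matrix.transpose_fromRows, hz, Matrix.fromCols_mulVec_sumElim]
    rw [Matrix.transpose_mul, Matrix.transpose_transpose, Matrix.transpose_transpose,
      Matrix.transpose_mul, Matrix.transpose_transpose, Matrix.transpose_transpose,
      Matrix.mulVec_mulVec, Matrix.mulVec_mulVec, Matrix.mul_assoc, Matrix.mul_assoc,
      Matrix.nonsing_inv_mul Hv hHvd, Matrix.nonsing_inv_mul Hw hHwd, Matrix.mul_one,
      Matrix.mul_one]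
  -- enorm squared as a quadratic form in Q
  have hnorm : ∀ u : Fin p → ℝ, euclNorm (Qh *ᵥ u) ^ 2 = u ⬝ᵥ (Q *ᵥ u) := by
    intro u
    have h : Qh *ᵥ u = u ᵥ* Qh := by rw [← Matrix.mulVec_transpose, hQhsym]
    rw [enorm_sq_eq_dot]
    nth_rewrite 1 [h]
    rw [← Matrix.dotProduct_mulVec, Matrix.mulVec_mulVec, hQ2]
  -- quadratic forms of the sandwiches
  have hsand : ∀ C : Matrix (Fin q ⊕ Fin p) (Fin p) ℝ,
      z ⬝ᵥ ((C * Q * Cᵀ) *ᵥ z) = (Cᵀ *ᵥ z) ⬝ᵥ (Q *ᵥ (Cᵀ *ᵥ z)) := by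
    intro C
    rw [← Matrix.mulVec_mulVec, ← Matrix.mulVec_mulVec, Matrix.dotProduct_mulVec,
      ← Matrix.mulVec_transpose]
  have hquad : euclNorm (Qh.mulVec (Φv.mulVec v + Φw.mulVec w)) ^ 2 -
      euclNorm (Qh.mulVec (Φvnc.mulVec v + Φwnc.mulVec w)) ^ 2 = z ⬝ᵥ (M *ᵥ z) := by
    rw [hMdef, Matrix.sub_mulVec, dotProduct_sub, hsand A, hsand B, hAz, hBz,
      hnorm, hnorm]
  rw [hquad]
  -- M is hermitian
  have hM : M.IsHermitian := by
    have hQh' : Q.IsHermitian := hQ.1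
    have h1 : (A * Q * Aᵀ).IsHermitian := by
      have := Matrix.isHermitian_mul_mul_conjTranspose A hQh'
      rwa [Matrix.conjTranspose_eq_transpose_of_trivial] at this
    have h2 : (B * Q * Bᵀ).IsHermitian := by
      have := Matrix.isHermitian_mul_mul_conjTranspose B hQh'
      rwa [Matrix.conjTranspose_eq_transpose_of_trivial] at this
    exact h1.sub h2
  -- all eigenvalues are ≤ μ
  have hev : ∀ i, hM.eigenvalues i ≤ max μ 0 := by
    intro i
    have h1 : hM.eigenvalues i ∈ spectrum ℝ M := hM.eigenvalues_mem_spectrum_real i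
    rw [← spec_toLin'] at h1
    have h2 : Module.End.HasEigenvalue (Matrix.toLin' M) (hM.eigenvalues i) :=
      Module.End.HasEigenvalue.of_mem_spectrum h1
    exact le_trans (hμ.2 h2) (le_max_left μ 0)
  -- z has squared norm at most 2
  have hzz : z ⬝ᵥ z ≤ 2 := by
    have h1 : (Hv *ᵥ v) ⬝ᵥ (Hv *ᵥ v) ≤ 1 := by
      rw [← enorm_sq_eq_dot]
      calc euclNorm (Hv *ᵥ v) ^ 2 ≤ 1 ^ 2 :=
            pow_le_pow_left₀ (Real.sqrt_nonneg _) hv 2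
        _ = 1 := one_pow 2
    have h2 : (Hw *ᵥ w) ⬝ᵥ (Hw *ᵥ w) ≤ 1 := by
      rw [← enorm_sq_eq_dot]
      calc euclNorm (Hw *ᵥ w) ^ 2 ≤ 1 ^ 2 :=
            pow_le_pow_left₀ (Real.sqrt_nonneg _) hw 2
        _ = 1 := one_pow 2
    rw [hz, sumElim_dotProduct_sumElim]
    linarith
  calc z ⬝ᵥ (M *ᵥ z) ≤ max μ 0 * (z ⬝ᵥ z) := quad_le hM hev z
    _ ≤ max μ 0 * 2 := mul_le_mul_of_nonneg_left hzz (le_max_right μ 0)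
    _ = 2 * max μ 0 := mul_comm _ _
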